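/- In a standard quasi-metric space X,d, the radius map (x,r) ↦ r from the poset of formal balls B(X,d) to ℝ≥0 with the opposite order is Scott-continuous, and for each s ∈ ℝ≥0 the map (x,r) ↦ (x, r+s) is Scott-continuous from B(X,d) to itself. -/

import Mathlib

open scoped ENNReal NNReal Classical

/-- A formal ball: a point together with a non-negative real radius. -/
structure FormalBall (X : Type*) where
  center : X
  radius : ℝ≥0

/-- A quasi-metric on `X`: a `[0,∞]`-valued distance with `d x x = 0`, the triangle
inequality, and `d x y = d y x = 0 → x = y`. -/
structure QuasiMetric (X : Type*) where
  d : X → X → ℝ≥0∞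
  refl : ∀ x, d x x = 0
  triangle : ∀ x y z, d x z ≤ d x y + d y z
  separated : ∀ x y, d x y = 0 → d y x = 0 → x = y

/-- The order on formal balls: `(x,r) ≤ (y,s)` iff `d x y ≤ r - s`
(equivalently `s ≤ r` and `d x y ≤ r - s`). -/
def ballLE {X : Type*} (q : QuasiMetric X) (b c : FormalBall X) : Prop :=
  c.radius ≤ b.radius ∧ q.d b.center c.center ≤ ↑(b.radius - c.radius)

/-- The partial order of formal balls `B(X,d)`. -/
def ballOrder {X : Type*} (q : QuasiMetric X) : PartialOrder (FormalBall X) where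
  le := ballLE q
  le_refl b := ⟨le_rfl, by simp [ballLE, q.refl]⟩
  le_trans a b c hab hbc := ⟨hbc.1.trans hab.1, by
    calc q.d a.center c.center ≤ q.d a.center b.center + q.d b.center c.center :=
          q.triangle _ _ _
      _ ≤ ↑(a.radius - b.radius) + ↑(b.radius - c.radius) := add_le_add hab.2 hbc.2
      _ = ↑(a.radius - c.radius) := by
          rw [← ENNReal.coe_add, tsub_add_tsub_cancel hab.1 hbc.1]⟩
  le_antisymm a b hab hba := by
    have hr : b.radius = a.radius := le_antisymm hab.1 hba.1
    have h1 : q.d a.center b.center = 0 := le_antisymm (by simpa [hr] using hab.2) bot_le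
    have h2 : q.d b.center a.center = 0 := le_antisymm (by simpa [hr] using hba.2) bot_le
    have hc := q.separated _ _ h1 h2
    cases a; cases b; simp_all

/-- Standardness: a directed family of formal balls has a supremum iff the family with all
radii uniformly shifted by `s` has one. -/
def Standard {X : Type*} (q : QuasiMetric X) : Prop :=
  letI := ballOrder q
  ∀ S : Set (FormalBall X), S.Nonempty → DirectedOn (· ≤ ·) S → ∀ s : ℝ≥0,
    ((∃ b, IsLUB S b) ↔
      ∃ b, IsLUB ((fun c : FormalBall X => FormalBall.mk c.center (c.radius + s)) '' S) b)

lemma shift_mono {X : Type*} (q : QuasiMetric X) (s : ℝ≥0) {b c : FormalBall X}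
    (h : ballLE q b c) :
    ballLE q ⟨b.center, b.radius + s⟩ ⟨c.center, c.radius + s⟩ :=
  ⟨add_le_add_left h.1 s, by simpa [add_tsub_add_eq_tsub_right] using h.2⟩

lemma shift_isLUB {X : Type*} (q : QuasiMetric X) (hstd : Standard q)
    (S : Set (FormalBall X)) (hne : S.Nonempty)
    (hdir : DirectedOn (ballLE q) S) (b : FormalBall X)
    (hb : @IsLUB _ (ballOrder q).toPreorder.toLE S b) (s : ℝ≥0) :
    @IsLUB _ (ballOrder q).toPreorder.toLE
      ((fun c : FormalBall X => FormalBall.mk c.center (c.radius + s)) '' S)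
      ⟨b.center, b.radius + s⟩ := by
  letI := ballOrder q
  obtain ⟨b', hb'⟩ := (hstd S hne hdir s).mp ⟨b, hb⟩
  have hub : (⟨b.center, b.radius + s⟩ : FormalBall X) ∈ upperBounds
      ((fun c : FormalBall X => FormalBall.mk c.center (c.radius + s)) '' S) := by
    rintro _ ⟨c, hc, rfl⟩
    exact shift_mono q s (hb.1 hc)
  have hA : ballLE q b' ⟨b.center, b.radius + s⟩ := hb'.2 hub
  have hs_le : s ≤ b'.radius := le_trans le_add_self hA.1
  have hu : (⟨b'.center, b'.radius - s⟩ : FormalBall X) ∈ upperBounds S := by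
    intro c hc
    have h : ballLE q ⟨c.center, c.radius + s⟩ b' := hb'.1 ⟨c, hc, rfl⟩
    refine ⟨tsub_le_iff_right.mpr h.1, ?_⟩
    have he : c.radius + s - b'.radius = c.radius - (b'.radius - s) := by
      conv_lhs => rw [← tsub_add_cancel_of_le hs_le]
      rw [add_tsub_add_eq_tsub_right]
    exact he ▸ h.2
  have hbu : ballLE q b ⟨b'.center, b'.radius - s⟩ := hb.2 hu
  have hrad : b'.radius = b.radius + s :=
    le_antisymm (tsub_le_iff_right.mp hbu.1) hA.1
  have hrs : b'.radius - s = b.radius := by rw [hrad, add_tsub_cancel_right]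
  have h1 : q.d b.center b'.center = 0 := by
    have := hbu.2
    rw [hrs, tsub_self] at this
    simpa using this
  have h2 : q.d b'.center b.center = 0 := by
    have := hA.2
    rw [hrad, tsub_self] at this
    simpa using this
  have hc : b'.center = b.center := q.separated _ _ h2 h1
  have : b' = (⟨b.center, b.radius + s⟩ : FormalBall X) := by
    cases b'; simp_all
  exact this ▸ hb'

/-- in a standard quasi-metric space, the radius map into `ℝ≥0` with the
opposite order is Scott-continuous, and so is each radius shift `(x,r) ↦ (x,r+s)`. -/
theorem radius_and_shift_scottContinuous {X : Type*} (q : QuasiMetric X)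
    (hstd : Standard q) :
    letI := ballOrder q
    ScottContinuous (fun b : FormalBall X => OrderDual.toDual b.radius) ∧
      ∀ s : ℝ≥0,
        ScottContinuous (fun b : FormalBall X => FormalBall.mk b.center (b.radius + s)) := by
  letI := ballOrder q
  refine ⟨?_, fun s S hne hdir b hb => shift_isLUB q hstd S hne hdir b hb s⟩
  intro S hne hdir b hb
  constructor
  · rintro _ ⟨c, hc, rfl⟩
    exact (hb.1 hc).1
  · intro t ht
    set t' := OrderDual.ofDual t with ht'
    have hlow : ∀ c ∈ S, t' ≤ c.radius := fun c hc => ht ⟨c, hc, rfl⟩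
    set f : FormalBall X → FormalBall X := fun c => ⟨c.center, c.radius - t'⟩ with hf
    set S' := f '' S with hS'
    have hne' : S'.Nonempty := hne.image f
    have fmono : ∀ c ∈ S, ∀ c'' ∈ S, ballLE q c c'' → ballLE q (f c) (f c'') := by
      intro c hc c'' hc'' h
      refine ⟨tsub_le_tsub_right h.1 t', ?_⟩
      have he : c.radius - t' - (c''.radius - t') = c.radius - c''.radius :=
        tsub_tsub_tsub_cancel_right (hlow c'' hc'')
      exact he ▸ h.2
    have hdir' : DirectedOn (ballLE q) S' := by
      rintro _ ⟨c, hc, rfl⟩ _ ⟨c'', hc'', rfl⟩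
      obtain ⟨e, he, hce, hc''e⟩ := hdir c hc c'' hc''
      exact ⟨f e, ⟨e, he, rfl⟩, fmono c hc e he hce, fmono c'' hc'' e he hc''e⟩
    have himg : (fun c : FormalBall X => FormalBall.mk c.center (c.radius + t')) '' S' = S := by
      ext x
      constructor
      · rintro ⟨_, ⟨c, hc, rfl⟩, rfl⟩
        simpa [f, tsub_add_cancel_of_le (hlow c hc)] using hc
      · intro hx
        exact ⟨f x, ⟨x, hx, rfl⟩, by simp [f, tsub_add_cancel_of_le (hlow x hx)]⟩
    obtain ⟨b'', hb''⟩ := (hstd S' hne' hdir' t').mpr ⟨b, himg ▸ hb⟩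
    have hlub := shift_isLUB q hstd S' hne' hdir' b'' hb'' t'
    rw [himg] at hlub
    have hbe : b = (⟨b''.center, b''.radius + t'⟩ : FormalBall X) := hb.unique hlub
    have : t' ≤ b.radius := by rw [hbe]; exact le_add_self
    exact this
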